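/- arXiv:1804.05264 — 6 statements merged into one kernel-verified Lean document; each statement's English description precedes it below -/
import Mathlib

section
/- Let k be a field, let n, d, h be natural numbers, and let M be a matroid on ground set Fin n whose rank is d+1, with H : Fin h → Set (Fin n) a bijection onto the set of hyperplanes of M. If a matrix S : Matrix (Fin n) (Fin h) k satisfies S i j = 0 ↔ i ∈ H j for all i and j (that is, S has the same support as a slack matrix of M), then Matrix.rank S ≥ d + 1. -/
open Classical Matrix MvPolynomial

/-- `V` is a realization of the matroid `M`: a set `I` is independent in `M` iff the
columns of `V` indexed by `I` are linearly independent over `k`. -/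
def IsRealization {k : Type*} [Field k] {n d : ℕ} (M : Matroid (Fin n))
    (V : Matrix (Fin (d + 1)) (Fin n) k) : Prop :=
  ∀ I : Set (Fin n), M.Indep I ↔ LinearIndependent k (fun i : I => Vᵀ (i : Fin n))

/-- `F` is a hyperplane of `M`: a flat of `M` of rank `d`. -/
def IsHyperplane {n : ℕ} (M : Matroid (Fin n)) (d : ℕ) (F : Set (Fin n)) : Prop :=
  M.IsFlat F ∧ ∃ I, M.IsBasis I F ∧ I.ncard = d

/-- `H` is a bijection onto the set of hyperplanes of `M`. -/
def HypEnum {n h : ℕ} (M : Matroid (Fin n)) (d : ℕ) (H : Fin h → Set (Fin n)) : Prop :=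
  Function.Injective H ∧ ∀ F : Set (Fin n), (∃ j, H j = F) ↔ IsHyperplane M d F

/-- `M` has rank `r` : some base of `M` has cardinality `r`. -/
def HasRank {n : ℕ} (M : Matroid (Fin n)) (r : ℕ) : Prop :=
  ∃ B, M.IsBase B ∧ B.ncard = r

/-- `W` is a normal matrix for the realization `V`: the dot product of column `j` of `W`
with column `i` of `V` is zero iff `i ∈ H j`. -/
def IsNormalMatrix {k : Type*} [Field k] {n d h : ℕ} (H : Fin h → Set (Fin n))
    (V : Matrix (Fin (d + 1)) (Fin n) k) (W : Matrix (Fin (d + 1)) (Fin h) k) : Prop :=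
  ∀ i j, (∑ r : Fin (d + 1), W r j * V r i) = 0 ↔ i ∈ H j

/-- Projective equivalence of realizations. -/
def ProjEquiv {k : Type*} [Field k] {n d : ℕ}
    (V V' : Matrix (Fin (d + 1)) (Fin n) k) : Prop :=
  ∃ (A : Matrix (Fin (d + 1)) (Fin (d + 1)) k) (b : Fin n → kˣ),
    IsUnit A ∧ V' = A * V * Matrix.diagonal (fun i => (b i : k))

/-- The index type of slack variables: pairs `(i, j)` with `i ∉ H j`. -/
abbrev SlackVar {n h : ℕ} (H : Fin h → Set (Fin n)) : Type :=
  {p : Fin n × Fin h // p.1 ∉ H p.2}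

/-- The symbolic slack matrix of `M`. -/
noncomputable def symbSlack {n h : ℕ} (H : Fin h → Set (Fin n)) (k : Type*) [Field k] :
    Matrix (Fin n) (Fin h) (MvPolynomial (SlackVar H) k) :=
  fun i j => if hij : i ∈ H j then 0 else X ⟨(i, j), hij⟩

/-- The ideal `J` generated by the `(d+2)`-minors of the symbolic slack matrix. -/
noncomputable def minorIdeal {n h : ℕ} (d : ℕ) (H : Fin h → Set (Fin n)) (k : Type*)
    [Field k] : Ideal (MvPolynomial (SlackVar H) k) :=
  Ideal.span { f | ∃ (r : Fin (d + 2) → Fin n) (c : Fin (d + 2) → Fin h),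
    Function.Injective r ∧ Function.Injective c ∧
      f = ((symbSlack H k).submatrix r c).det }

/-- The product `P` of all slack variables. -/
noncomputable def allVarsProd {n h : ℕ} (H : Fin h → Set (Fin n)) (k : Type*) [Field k] :
    MvPolynomial (SlackVar H) k :=
  ∏ e : SlackVar H, X e

/-- The slack ideal `I_M` : the saturation of `J` at `P`, as a set. -/
noncomputable def slackSet {n h : ℕ} (d : ℕ) (H : Fin h → Set (Fin n)) (k : Type*) [Field k] :
    Set (MvPolynomial (SlackVar H) k) :=
  {f | ∃ N : ℕ, allVarsProd H k ^ N * f ∈ minorIdeal d H k}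

/-- The matrix `S(s)` obtained by evaluating the symbolic slack matrix at `s`. -/
noncomputable def slackEval {k : Type*} [Field k] {n h : ℕ} (H : Fin h → Set (Fin n))
    (s : SlackVar H → k) : Matrix (Fin n) (Fin h) k :=
  fun i j => if hij : i ∈ H j then 0 else s ⟨(i, j), hij⟩

/-- Cyclic successor in `Fin m`. -/
def cycSucc {m : ℕ} (i : Fin m) : Fin m := ⟨(i.val + 1) % m, Nat.mod_lt _ i.pos⟩

/-- The cycle ideal `C_S` of a slack matrix `S`. -/
noncomputable def cycleIdeal {k : Type*} [Field k] {n h : ℕ} (H : Fin h → Set (Fin n))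
    (S : Matrix (Fin n) (Fin h) k) : Ideal (MvPolynomial (SlackVar H) k) :=
  Ideal.span { f | ∃ (m : ℕ) (_ : 2 ≤ m) (a : Fin m → Fin n) (b : Fin m → Fin h)
    (_ : Function.Injective a) (_ : Function.Injective b)
    (h1 : ∀ i, a i ∉ H (b i)) (h2 : ∀ i, a (cycSucc i) ∉ H (b i)),
    f = C (∏ i, S (a (cycSucc i)) (b i)) * ∏ i, X ⟨(a i, b i), h1 i⟩
      - C (∏ i, S (a i) (b i)) * ∏ i, X ⟨(a (cycSucc i), b i), h2 i⟩ }

lemma flat_closure_aux {α : Type*} (M : Matroid α) (X : Set α) : M.IsFlat (M.closure X) := by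
  rw [Matroid.closure_def, Set.sInter_eq_iInter]
  have : Nonempty {F // F ∈ {F | M.IsFlat F ∧ X ∩ M.E ⊆ F}} :=
    ⟨⟨M.E, M.ground_isFlat, Set.inter_subset_right⟩⟩
  exact Matroid.IsFlat.iInter fun F => F.2.1

/-- any matrix with the support of a slack matrix of a rank `d+1` matroid
has rank at least `d+1`. -/
theorem stmt0 {k : Type*} [Field k] {n d h : ℕ} (M : Matroid (Fin n))
    (hE : M.E = Set.univ) (hrk : HasRank M (d + 1))
    (H : Fin h → Set (Fin n)) (hH : HypEnum M d H)
    (S : Matrix (Fin n) (Fin h) k) (hS : ∀ i j, S i j = 0 ↔ i ∈ H j) :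
    d + 1 ≤ S.rank := by
  classical
  obtain ⟨B, hB, hBcard⟩ := hrk
  have hBfin : B.Finite := Set.toFinite B
  have hBindep : M.Indep B := hB.indep
  have hcard : B.toFinset.card = d + 1 := by
    rw [← Set.ncard_eq_toFinset_card'] ; exact hBcard
  let e : Fin (d + 1) ≃ B.toFinset := (B.toFinset.equivFinOfCardEq hcard).symm
  let f : Fin (d + 1) → Fin n := fun i => (e i : Fin n)
  have hfB : ∀ i, f i ∈ B := fun i => Set.mem_toFinset.mp (e i).2
  have hfinj : Function.Injective f := by
    intro i i' hii'
    exact e.injective (Subtype.ext hii')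
  -- each B \ {f i} spans a hyperplane
  have hindep : ∀ i, M.Indep (B \ {f i}) := fun i => hBindep.subset Set.diff_subset
  have hhyp : ∀ i, IsHyperplane M d (M.closure (B \ {f i})) := by
    intro i
    refine ⟨flat_closure_aux M _, B \ {f i}, (hindep i).isBasis_closure, ?_⟩
    rw [Set.ncard_diff_singleton_of_mem (hfB i)]
    simp [hBcard]
  choose g hg using fun i => (hH.2 (M.closure (B \ {f i}))).mpr (hhyp i)
  have hnotin : ∀ i, f i ∉ H (g i) := by
    intro i
    rw [hg i]
    exact hBindep.notMem_closure_diff_of_mem (hfB i)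
  have hin : ∀ i i', i ≠ i' → f i' ∈ H (g i) := by
    intro i i' hne
    rw [hg i]
    have hsub : B \ {f i} ⊆ M.E := by rw [hE] ; exact Set.subset_univ _
    refine M.subset_closure _ hsub ⟨hfB i', ?_⟩
    simp only [Set.mem_singleton_iff]
    intro hcontra
    exact hne (hfinj hcontra.symm)
  -- the columns of S indexed by g are linearly independent
  set c : Fin (d + 1) → (Fin n → k) := fun i => fun r => S r (g i) with hc
  have hmem : ∀ i, c i ∈ LinearMap.range S.mulVecLin := by
    intro i
    refine ⟨Pi.single (g i) 1, ?_⟩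
    ext r
    simp [Matrix.mulVecLin_apply, Matrix.mulVec, dotProduct, Pi.single_apply, hc]
  have hli : LinearIndependent k c := by
    rw [Fintype.linearIndependent_iff]
    intro a ha i
    have := congrFun ha (f i)
    simp only [Finset.sum_apply, Pi.smul_apply, smul_eq_mul, Pi.zero_apply, hc] at this
    rw [Finset.sum_eq_single i] at this
    · have hSne : S (f i) (g i) ≠ 0 := fun h0 => hnotin i ((hS _ _).mp h0)
      exact (mul_eq_zero.mp this).resolve_right hSne
    · intro j _ hji
      have : S (f i) (g j) = 0 := (hS _ _).mpr (hin j i hji)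
      rw [this, mul_zero]
    · intro hi ; exact absurd (Finset.mem_univ i) hi
  -- conclude
  set R := LinearMap.range S.mulVecLin
  let w : Fin (d + 1) → R := fun i => ⟨c i, hmem i⟩
  have hliw : LinearIndependent k w :=
    (id
      (by
        have : R.subtype ∘ w = c := rfl
        exact (LinearIndependent.of_comp R.subtype (by rwa [this]))))
  have := hliw.fintype_card_le_finrank
  simpa [Matrix.rank] using this
end

section
/- If V is a realization of M and W is a normal matrix for V, then the slack matrix S = Vᵀ * W satisfies Matrix.rank S = d + 1. -/
open Classical Matrix MvPolynomial

/-- Rank of an arbitrary submatrix is at most the rank of the matrix. -/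
lemma rank_submatrix_le' {k : Type*} [Field k] {m n s : Type*} [Fintype m] [Fintype n]
    [Fintype s] [DecidableEq n] (A : Matrix m n k) (r : s → m) (c : s → n) :
    (A.submatrix r c).rank ≤ A.rank := by
  classical
  set P : Matrix n s k := Matrix.of fun j' j => if c j = j' then 1 else 0 with hP
  have h1 : A.submatrix r c = (A * P).submatrix r _root_.id := by
    ext i j
    simp [Matrix.mul_apply, hP, mul_ite, mul_one, mul_zero]
  have h2 : ∀ B : Matrix m s k, (B.submatrix r _root_.id).rank ≤ B.rank := by
    intro B
    rw [Matrix.rank, Matrix.rank]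
    have hcomp : (B.submatrix r _root_.id).mulVecLin
        = (LinearMap.funLeft k k r).comp B.mulVecLin := by
      ext x i
      rfl
    rw [hcomp, LinearMap.range_comp]
    exact Submodule.finrank_map_le _ _
  calc (A.submatrix r c).rank = ((A * P).submatrix r _root_.id).rank := by rw [h1]
    _ ≤ (A * P).rank := h2 _
    _ ≤ A.rank := Matrix.rank_mul_le_left _ _

/-- the slack matrix of a realization of a rank `d+1` matroid has rank `d+1`. -/
theorem stmt1 {k : Type*} [Field k] {n d h : ℕ} (M : Matroid (Fin n))
    (hE : M.E = Set.univ) (hrk : HasRank M (d + 1))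
    (H : Fin h → Set (Fin n)) (hH : HypEnum M d H)
    (V : Matrix (Fin (d + 1)) (Fin n) k) (hV : IsRealization M V)
    (W : Matrix (Fin (d + 1)) (Fin h) k) (hW : IsNormalMatrix H V W) :
    (Vᵀ * W).rank = d + 1 := by
  classical
  obtain ⟨B, hB, hBcard⟩ := hrk
  have hBfin : B.Finite := B.toFinite
  haveI : Fintype B := hBfin.fintype
  have hcard : Fintype.card B = d + 1 := by
    rw [← Nat.card_eq_fintype_card, Nat.card_coe_set_eq, hBcard]
  set e : Fin (d + 1) ≃ B := (Fintype.equivFinOfCardEq hcard).symm with he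
  set r : Fin (d + 1) → Fin n := fun a => (e a : Fin n) with hrdef
  have hr_inj : Function.Injective r := fun a b hab => e.injective (Subtype.ext hab)
  have hrB : ∀ a, r a ∈ B := fun a => (e a).2
  have hIa : ∀ a : Fin (d + 1), M.Indep (B \ {r a}) :=
    fun a => hB.indep.subset Set.diff_subset
  have hhyp : ∀ a : Fin (d + 1), IsHyperplane M d (M.closure (B \ {r a})) := by
    intro a
    refine ⟨flat_closure_aux M _, B \ {r a}, (hIa a).isBasis_closure, ?_⟩
    rw [Set.ncard_diff_singleton_of_mem (hrB a), hBcard]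
    omega
  choose c hc using fun a => ((hH.2 _).mpr (hhyp a))
  have hentry : ∀ i j, (Vᵀ * W) i j = ∑ rr, W rr j * V rr i := by
    intro i j
    rw [Matrix.mul_apply]
    exact Finset.sum_congr rfl fun rr _ => mul_comm _ _
  have hz : ∀ a b : Fin (d + 1), a ≠ b → (Vᵀ * W) (r a) (c b) = 0 := by
    intro a b hab
    rw [hentry]
    refine (hW _ _).mpr ?_
    rw [hc]
    refine M.subset_closure _ (by rw [hE]; exact Set.subset_univ _) ?_
    exact ⟨hrB a, fun hmem => hab (hr_inj (Set.mem_singleton_iff.mp hmem))⟩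
  have hnz : ∀ a : Fin (d + 1), (Vᵀ * W) (r a) (c a) ≠ 0 := by
    intro a hzero
    rw [hentry] at hzero
    exact hB.indep.notMem_closure_diff_of_mem (hrB a) (hc a ▸ (hW _ _).mp hzero)
  set T : Matrix (Fin (d + 1)) (Fin (d + 1)) k := (Vᵀ * W).submatrix r c with hT
  have hTdiag : T = Matrix.diagonal (fun a => (Vᵀ * W) (r a) (c a)) := by
    ext a b
    by_cases hab : a = b
    · subst hab; simp [hT, Matrix.diagonal]
    · simp [hT, Matrix.diagonal, hab, hz a b hab]
  have hTunit : IsUnit T := by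
    rw [Matrix.isUnit_iff_isUnit_det, hTdiag, Matrix.det_diagonal]
    exact (Finset.prod_ne_zero_iff.mpr fun a _ => hnz a).isUnit
  have hTrank : T.rank = d + 1 := by
    rw [Matrix.rank_of_isUnit T hTunit, Fintype.card_fin]
  refine le_antisymm ?_ ?_
  · exact le_trans (Matrix.rank_mul_le_right _ _)
      (by simpa using W.rank_le_card_height)
  · calc d + 1 = T.rank := hTrank.symm
      _ ≤ (Vᵀ * W).rank := rank_submatrix_le' _ r c
end

section
/- Let s : E → k satisfy s e ≠ 0 for every e ∈ E. Then there exist a realization V of M and a normal matrix W for V with Vᵀ * W = S(s) if and only if MvPolynomial.eval s f = 0 for every f ∈ I_M (that is, s is a point of the slack variety lying in the torus). -/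
open Classical Matrix MvPolynomial

section StmtSixAux

open Set

lemma flat_closure_indep {α : Type*} {M : Matroid α} {I : Set α} (hI : M.Indep I) :
    M.IsFlat (M.closure I) := by
  rw [hI.closure_eq_setOfPred_isBasis_insert]
  set F := {x | M.IsBasis I (insert x I)}
  have hIF : M.IsBasis I F := hI.isBasis_setOfPred_insert_isBasis
  exact ⟨fun J X hJF hJX e heX ↦ show M.IsBasis _ _ from
    (hIF.isBasis_of_isBasis_of_subset_of_subset (hJX.isBasis_union hJF) hJF.subset
      (hIF.subset.trans subset_union_right)).isBasis_subset (subset_insert _ _)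
      (insert_subset (Or.inl heX) (hIF.subset.trans subset_union_right)), hIF.subset_ground⟩

variable {k : Type*} [Field k] {n d h : ℕ} {M : Matroid (Fin n)}

lemma base_ncard (hrk : HasRank M (d + 1)) {B : Set (Fin n)} (hB : M.IsBase B) :
    B.ncard = d + 1 := by
  obtain ⟨B₀, hB₀, hc⟩ := hrk
  rw [hB.ncard_eq_ncard_of_isBase hB₀, hc]

lemma hyp_of_base_diff (hrk : HasRank M (d + 1)) {B : Set (Fin n)} (hB : M.IsBase B)
    {x : Fin n} (hx : x ∈ B) : IsHyperplane M d (M.closure (B \ {x})) := by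
  have hind : M.Indep (B \ {x}) := hB.indep.subset diff_subset
  refine ⟨flat_closure_indep hind, B \ {x}, hind.isBasis_closure, ?_⟩
  rw [Set.ncard_diff_singleton_of_mem hx, base_ncard hrk hB]; omega

lemma hyp_ne_univ (hE : M.E = Set.univ) (hrk : HasRank M (d + 1))
    {H : Fin h → Set (Fin n)} (hH : HypEnum M d H) (j : Fin h) : ∃ i, i ∉ H j := by
  obtain ⟨hF, I, hIF, hId⟩ := (hH.2 (H j)).mp ⟨j, rfl⟩
  by_contra hcon
  push_neg at hcon
  have huniv : H j = M.E := by
    rw [hE]; exact Set.eq_univ_of_forall hcon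
  rw [huniv] at hIF
  have := base_ncard hrk (Matroid.isBasis_ground_iff.mp hIF)
  omega

lemma exists_hyp_superset (hE : M.E = Set.univ) (hrk : HasRank M (d + 1))
    {H : Fin h → Set (Fin n)} (hH : HypEnum M d H) {X : Set (Fin n)}
    (hX : ¬ M.Spanning X) : ∃ j, X ⊆ H j := by
  have hXE : X ⊆ M.E := by rw [hE]; exact Set.subset_univ _
  obtain ⟨Ib, hIb⟩ := M.exists_isBasis X hXE
  obtain ⟨B, hB, hIB⟩ := hIb.indep.exists_isBase_superset
  have hne : Ib ≠ B := by
    rintro rfl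
    refine hX ((M.spanning_iff_closure_eq hXE).mpr ?_)
    rw [← hIb.closure_eq_closure, hB.closure_eq]
  obtain ⟨x, hxB, hxI⟩ := Set.exists_of_ssubset (hIB.ssubset_of_ne hne)
  obtain ⟨j, hj⟩ := (hH.2 (M.closure (B \ {x}))).mpr (hyp_of_base_diff hrk hB hxB)
  refine ⟨j, ?_⟩
  rw [hj]
  calc X ⊆ M.closure X := M.subset_closure X hXE
    _ = M.closure Ib := hIb.closure_eq_closure.symm
    _ ⊆ M.closure (B \ {x}) := M.closure_subset_closure
        (subset_diff_singleton hIB hxI)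

lemma enum_base (hrk : HasRank M (d + 1)) {B : Set (Fin n)} (hB : M.IsBase B) :
    ∃ b : Fin (d + 1) → Fin n, Function.Injective b ∧ Set.range b = B := by
  haveI : Fintype B := B.toFinite.fintype
  have hcard : Fintype.card B = d + 1 := by
    rw [← Set.toFinset_card, ← Set.ncard_eq_toFinset_card', base_ncard hrk hB]
  let e := (Fintype.equivFinOfCardEq hcard).symm
  refine ⟨fun r => (e r : Fin n), Subtype.coe_injective.comp e.injective, ?_⟩
  ext y
  constructor
  · rintro ⟨r, rfl⟩; exact (e r).2
  · intro hy; exact ⟨e.symm ⟨y, hy⟩, by simp⟩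

lemma base_hyp_indices (hE : M.E = Set.univ) (hrk : HasRank M (d + 1))
    {H : Fin h → Set (Fin n)} (hH : HypEnum M d H)
    {b : Fin (d + 1) → Fin n} (hbinj : Function.Injective b)
    (hb : M.IsBase (Set.range b)) :
    ∃ j : Fin (d + 1) → Fin h, Function.Injective j ∧
      ∀ r r', (b r ∈ H (j r') ↔ r ≠ r') := by
  have hmem : ∀ r r' : Fin (d + 1),
      b r ∈ M.closure (Set.range b \ {b r'}) ↔ r ≠ r' := by
    intro r r'
    constructor
    · rintro hmem rfl
      exact hb.indep.notMem_closure_sdiff_of_mem ⟨r, rfl⟩ hmem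
    · intro hne
      refine M.subset_closure _ (by rw [hE]; exact Set.subset_univ _) ⟨⟨r, rfl⟩, ?_⟩
      simpa using fun hEq => hne (hbinj hEq)
  choose j hj using fun r' : Fin (d + 1) =>
    (hH.2 (M.closure (Set.range b \ {b r'}))).mpr
      (hyp_of_base_diff hrk hb ⟨r', rfl⟩)
  have hkey : ∀ r r', b r ∈ H (j r') ↔ r ≠ r' := by
    intro r r'; rw [hj r']; exact hmem r r'
  refine ⟨j, ?_, hkey⟩
  intro a a' heq
  by_contra hne
  have h1 : b a ∈ H (j a') := (hkey a a').mpr hne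
  rw [← heq] at h1
  exact (hkey a a).mp h1 rfl

lemma dot_sum_rep {m : ℕ} (V : Matrix (Fin (d + 1)) (Fin n) k) (b : Fin m → Fin n)
    (w : Fin (d + 1) → k) (c : Fin m → k) (v : Fin (d + 1) → k)
    (hc : ∑ r, c r • Vᵀ (b r) = v) :
    ∑ t, w t * v t = ∑ r, c r * ∑ t, w t * V t (b r) := by
  rw [← hc]
  simp only [Finset.sum_apply, Pi.smul_apply, smul_eq_mul, Matrix.transpose_apply,
    Finset.mul_sum]
  rw [Finset.sum_comm]
  exact Finset.sum_congr rfl fun r _ => Finset.sum_congr rfl fun t _ => by ring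

variable {V : Matrix (Fin (d + 1)) (Fin n) k} {W : Matrix (Fin (d + 1)) (Fin h) k}
  {H : Fin h → Set (Fin n)}

lemma li_of_base (hE : M.E = Set.univ) (hrk : HasRank M (d + 1)) (hH : HypEnum M d H)
    (hVW : IsNormalMatrix H V W) {b : Fin (d + 1) → Fin n} (hbinj : Function.Injective b)
    (hb : M.IsBase (Set.range b)) :
    LinearIndependent k (fun r => Vᵀ (b r)) := by
  obtain ⟨j, hjinj, hkey⟩ := base_hyp_indices hE hrk hH hbinj hb
  rw [Fintype.linearIndependent_iff]
  intro c hc r'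
  have h0 : ∑ r, c r * ∑ t, W t (j r') * V t (b r) = 0 := by
    rw [← dot_sum_rep V b (fun t => W t (j r')) c 0 hc]
    simp
  rw [Finset.sum_eq_single r'] at h0
  · rcases mul_eq_zero.mp h0 with hcc | hcc
    · exact hcc
    · exact absurd ((hVW _ _).mp hcc) (by simp [hkey r' r'])
  · intro r _ hne
    rw [(hVW _ _).mpr ((hkey r r').mpr hne), mul_zero]
  · intro habs; exact absurd (Finset.mem_univ r') habs

lemma base_of_li (hE : M.E = Set.univ) (hrk : HasRank M (d + 1)) (hH : HypEnum M d H)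
    (hVW : IsNormalMatrix H V W) {b : Fin (d + 1) → Fin n} (hbinj : Function.Injective b)
    (hli : LinearIndependent k fun r : Fin (d + 1) => Vᵀ (b r)) :
    M.IsBase (Set.range b) := by
  by_contra hnb
  have hns : ¬ M.Spanning (Set.range b) := by
    intro hsp
    obtain ⟨B', hB', hsub⟩ := hsp.exists_isBase_subset
    have hcard : (Set.range b).ncard ≤ B'.ncard := by
      rw [base_ncard hrk hB', ← Set.image_univ, Set.ncard_image_of_injective _ hbinj,
        Set.ncard_univ]
      simp
    exact hnb (Set.eq_of_subset_of_ncard_le hsub hcard (Set.toFinite _) ▸ hB')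
  obtain ⟨j₀, hj₀⟩ := exists_hyp_superset hE hrk hH hns
  obtain ⟨i0, hi0⟩ := hyp_ne_univ hE hrk hH j₀
  have hzero : ∀ r, ∑ t, W t j₀ * V t (b r) = 0 := fun r => (hVW _ _).mpr (hj₀ ⟨r, rfl⟩)
  have hspan : ⊤ ≤ Submodule.span k (Set.range fun r : Fin (d + 1) => Vᵀ (b r)) := by
    rw [hli.span_eq_top_of_card_eq_finrank (by simp [Module.finrank_fin_fun])]
  obtain ⟨c, hc⟩ := (Submodule.mem_span_range_iff_exists_fun k).mp (hspan Submodule.mem_top :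
    Vᵀ i0 ∈ _)
  have hfin : ∑ t, W t j₀ * V t i0 = 0 := by
    rw [show (∑ t, W t j₀ * V t i0) = ∑ t, W t j₀ * Vᵀ i0 t from rfl,
      dot_sum_rep V b (fun t => W t j₀) c (Vᵀ i0) hc]
    exact Finset.sum_eq_zero fun r _ => by rw [hzero r, mul_zero]
  exact hi0 ((hVW i0 j₀).mp hfin)

lemma isRealization_of_normal (hE : M.E = Set.univ) (hrk : HasRank M (d + 1))
    (hH : HypEnum M d H) (hVW : IsNormalMatrix H V W) : IsRealization M V := by
  intro I
  constructor
  · intro hI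
    obtain ⟨B, hB, hIB⟩ := hI.exists_isBase_superset
    obtain ⟨b, hbinj, hbr⟩ := enum_base hrk hB
    rw [← hbr] at hB hIB
    have hli := li_of_base hE hrk hH hVW hbinj hB
    choose g hg using fun i : I => (hIB i.2 : (i : Fin n) ∈ Set.range b)
    have hginj : Function.Injective g := fun i i' he =>
      Subtype.ext (by rw [← hg i, ← hg i', he])
    have hcomp : (fun i : I => Vᵀ (i : Fin n)) = (fun r => Vᵀ (b r)) ∘ g := by
      funext i; simp [hg i]
    rw [hcomp]
    exact hli.comp g hginj
  · intro hli
    obtain ⟨B₀, hB₀, -⟩ := id hrk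
    obtain ⟨b₀, hb₀inj, hb₀r⟩ := enum_base hrk hB₀
    rw [← hb₀r] at hB₀
    have hli₀ := li_of_base hE hrk hH hVW hb₀inj hB₀
    have hspan_t : ∀ v : Fin (d + 1) → k,
        v ∈ Submodule.span k (Set.range fun i : Fin n => Vᵀ i) := by
      intro v
      have h1 : Submodule.span k (Set.range fun r : Fin (d + 1) => Vᵀ (b₀ r)) = ⊤ :=
        hli₀.span_eq_top_of_card_eq_finrank (by simp [Module.finrank_fin_fun])
      have h2 := Submodule.span_mono (R := k)
        (show Set.range (fun r : Fin (d + 1) => Vᵀ (b₀ r)) ⊆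
            Set.range (fun i : Fin n => Vᵀ i) by rintro _ ⟨r, rfl⟩; exact ⟨b₀ r, rfl⟩)
      rw [h1] at h2
      exact h2 Submodule.mem_top
    have himg : LinearIndependent k
        ((↑) : ((fun i : Fin n => Vᵀ i) '' I) → (Fin (d + 1) → k)) :=
        LinearIndepOn.id_image (v := fun i : Fin n => Vᵀ i) (s := I) hli
    obtain ⟨bs, hbst, hsbs, htbs, hbsli⟩ := exists_linearIndepOn_id_extension
      (t := Set.range fun i : Fin n => Vᵀ i) himg
      (by rintro _ ⟨i, hi, rfl⟩; exact ⟨i, rfl⟩)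
    replace hbsli : LinearIndependent k ((↑) : bs → (Fin (d + 1) → k)) := hbsli
    haveI : Fintype bs := hbsli.setFinite.fintype
    have hcardbs : Fintype.card bs = d + 1 := by
      have h3 : Submodule.span k bs = ⊤ := by
        rw [eq_top_iff]
        intro v _
        exact Submodule.span_le.mpr htbs (hspan_t v)
      have h4 := finrank_span_set_eq_card hbsli
      rw [h3, finrank_top, Module.finrank_fin_fun, Set.toFinset_card] at h4
      omega
    have hVinj : ∀ i i' : Fin n, i ∈ I → i' ∈ I → Vᵀ i = Vᵀ i' → i = i' := by
      intro i i' hi hi' he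
      exact congrArg Subtype.val
        (hli.injective (a₁ := ⟨i, hi⟩) (a₂ := ⟨i', hi'⟩) he)
    have hpick : ∀ v : bs, ∃ i : Fin n, Vᵀ i = v ∧
        ((v : Fin (d + 1) → k) ∈ (fun i : Fin n => Vᵀ i) '' I → i ∈ I) := by
      intro v
      by_cases hv : (v : Fin (d + 1) → k) ∈ (fun i : Fin n => Vᵀ i) '' I
      · obtain ⟨i, hiI, hie⟩ := hv
        exact ⟨i, hie, fun _ => hiI⟩
      · obtain ⟨i, hie⟩ := hbst v.2
        exact ⟨i, hie, fun hmemv => absurd hmemv hv⟩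
    choose idx hidx1 hidx2 using hpick
    let e2 : Fin (d + 1) ≃ bs := (Fintype.equivFinOfCardEq hcardbs).symm
    set b : Fin (d + 1) → Fin n := fun r => idx (e2 r) with hbdef
    have hVb : ∀ r, Vᵀ (b r) = (e2 r : Fin (d + 1) → k) := fun r => hidx1 (e2 r)
    have hbinj : Function.Injective b := by
      intro r r' he
      have : (e2 r : Fin (d + 1) → k) = (e2 r' : Fin (d + 1) → k) := by
        rw [← hVb r, ← hVb r', he]
      exact e2.injective (Subtype.ext this)
    have hlib : LinearIndependent k fun r => Vᵀ (b r) := by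
      rw [show (fun r => Vᵀ (b r)) = ((↑) : bs → (Fin (d + 1) → k)) ∘ e2 from funext hVb]
      exact hbsli.comp e2 e2.injective
    have hbase := base_of_li hE hrk hH hVW hbinj hlib
    refine hbase.indep.subset ?_
    intro i hi
    have hv : Vᵀ i ∈ bs := hsbs ⟨i, hi, rfl⟩
    have hidxI : idx ⟨Vᵀ i, hv⟩ ∈ I := hidx2 _ ⟨i, hi, rfl⟩
    have hieq : idx ⟨Vᵀ i, hv⟩ = i := hVinj _ _ hidxI hi (hidx1 _)
    exact ⟨e2.symm ⟨Vᵀ i, hv⟩, by rw [hbdef]; simp only [Equiv.apply_symm_apply]; exact hieq⟩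

lemma det_mul_of_lt {a c : ℕ} (hab : c < a) (X : Matrix (Fin a) (Fin c) k)
    (Y : Matrix (Fin c) (Fin a) k) : (X * Y).det = 0 := by
  by_contra hdet
  have hunit : IsUnit (X * Y).det := isUnit_iff_ne_zero.mpr hdet
  have h1 : (X * Y) * (X * Y)⁻¹ = 1 := Matrix.mul_nonsing_inv _ hunit
  have hsurj : Function.Surjective (Matrix.mulVecLin X) := by
    intro v
    refine ⟨(Y * (X * Y)⁻¹).mulVec v, ?_⟩
    rw [Matrix.mulVecLin_apply, Matrix.mulVec_mulVec, ← Matrix.mul_assoc, h1,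
      Matrix.one_mulVec]
  have hle := LinearMap.finrank_range_le (Matrix.mulVecLin X)
  rw [LinearMap.range_eq_top.mpr hsurj, finrank_top, Module.finrank_fin_fun,
    Module.finrank_fin_fun] at hle
  omega

lemma slackEval_eq_zero_iff {H : Fin h → Set (Fin n)} {s : SlackVar H → k}
    (hs : ∀ e, s e ≠ 0) (i : Fin n) (j : Fin h) :
    slackEval H s i j = 0 ↔ i ∈ H j := by
  by_cases hij : i ∈ H j <;> simp [slackEval, hij]
  exact hs _

lemma eval_symbSlack (H : Fin h → Set (Fin n)) (s : SlackVar H → k) :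
    (symbSlack H k).map (MvPolynomial.eval s) = slackEval H s := by
  ext i j
  by_cases hij : i ∈ H j <;> simp [symbSlack, slackEval, hij]

lemma exists_factorization (hE : M.E = Set.univ) (hrk : HasRank M (d + 1))
    {H : Fin h → Set (Fin n)} (hH : HypEnum M d H) (s : SlackVar H → k)
    (hs : ∀ e, s e ≠ 0)
    (hmin : ∀ (r : Fin (d + 2) → Fin n) (c : Fin (d + 2) → Fin h),
      Function.Injective r → Function.Injective c →
      ((slackEval H s).submatrix r c).det = 0) :
    ∃ (V : Matrix (Fin (d + 1)) (Fin n) k) (W : Matrix (Fin (d + 1)) (Fin h) k),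
      Vᵀ * W = slackEval H s := by
  set S := slackEval H s with hSdef
  have hS0 : ∀ i j, S i j = 0 ↔ i ∈ H j := slackEval_eq_zero_iff hs
  obtain ⟨B₀, hB₀, -⟩ := id hrk
  obtain ⟨b, hbinj, hbr⟩ := enum_base hrk hB₀
  rw [← hbr] at hB₀
  obtain ⟨j, hjinj, hkey⟩ := base_hyp_indices hE hrk hH hbinj hB₀
  set D : Matrix (Fin (d + 1)) (Fin (d + 1)) k := fun r t => S (b r) (j t) with hD
  have hdiag : D = Matrix.diagonal (fun r => S (b r) (j r)) := by
    ext r t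
    rcases eq_or_ne r t with rfl | hne
    · simp [Matrix.diagonal, hD]
    · rw [Matrix.diagonal_apply_ne _ hne]
      exact (hS0 _ _).mpr ((hkey r t).mpr hne)
  have hgd : ∀ r, S (b r) (j r) ≠ 0 := fun r h0 => ((hkey r r).mp ((hS0 _ _).mp h0)) rfl
  have hdet : IsUnit D.det := by
    rw [hdiag, Matrix.det_diagonal]
    exact isUnit_iff_ne_zero.mpr (Finset.prod_ne_zero_iff.mpr fun r _ => hgd r)
  haveI : Invertible D := D.invertibleOfIsUnitDet hdet
  have key : ∀ (i : Fin n) (c : Fin h),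
      ∑ r, (∑ t, S i (j t) * D⁻¹ t r) * S (b r) c = S i c := by
    intro i c
    by_cases hiB : i ∈ Set.range b
    · obtain ⟨r₀, rfl⟩ := hiB
      have h1 : ∀ r, (∑ t, S (b r₀) (j t) * D⁻¹ t r) = (D * D⁻¹) r₀ r := by
        intro r; rw [Matrix.mul_apply]
      rw [Finset.sum_congr rfl fun r _ => by rw [h1 r], Matrix.mul_nonsing_inv D hdet]
      simp [Matrix.one_apply]
    · by_cases hcJ : c ∈ Set.range j
      · obtain ⟨t₀, rfl⟩ := hcJ
        have h2 : ∀ t, S i (j t) * ((D⁻¹ * D) t t₀) =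
            ∑ r, (S i (j t) * D⁻¹ t r) * D r t₀ := by
          intro t
          rw [Matrix.mul_apply, Finset.mul_sum]
          exact Finset.sum_congr rfl fun r _ => by ring
        calc ∑ r, (∑ t, S i (j t) * D⁻¹ t r) * S (b r) (j t₀)
            = ∑ r, ∑ t, (S i (j t) * D⁻¹ t r) * D r t₀ := by
              simp only [Finset.sum_mul]; rfl
          _ = ∑ t, ∑ r, (S i (j t) * D⁻¹ t r) * D r t₀ := Finset.sum_comm
          _ = ∑ t, S i (j t) * ((D⁻¹ * D) t t₀) := by
              exact Finset.sum_congr rfl fun t _ => (h2 t).symm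
          _ = S i (j t₀) := by
              rw [Matrix.nonsing_inv_mul D hdet]
              simp [Matrix.one_apply]
      · have hrinj : Function.Injective (Sum.elim b (fun _ : Fin 1 => i)) := by
          rintro (x | x) (y | y) hxy
          · exact congrArg Sum.inl (hbinj hxy)
          · exact absurd ⟨x, hxy⟩ hiB
          · exact absurd ⟨y, hxy.symm⟩ hiB
          · exact congrArg Sum.inr (Subsingleton.elim x y)
        have hcinj : Function.Injective (Sum.elim j (fun _ : Fin 1 => c)) := by
          rintro (x | x) (y | y) hxy
          · exact congrArg Sum.inl (hjinj hxy)
          · exact absurd ⟨x, hxy⟩ hcJ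
          · exact absurd ⟨y, hxy.symm⟩ hcJ
          · exact congrArg Sum.inr (Subsingleton.elim x y)
        have e : (Fin (d + 1) ⊕ Fin 1) ≃ Fin (d + 2) := finSumFinEquiv
        have hdet0 := hmin (Sum.elim b (fun _ : Fin 1 => i) ∘ e.symm)
          (Sum.elim j (fun _ : Fin 1 => c) ∘ e.symm)
          (hrinj.comp e.symm.injective) (hcinj.comp e.symm.injective)
        have hdet1 : (S.submatrix (Sum.elim b fun _ : Fin 1 => i)
            (Sum.elim j fun _ : Fin 1 => c)).det = 0 := by
          rw [← Matrix.det_submatrix_equiv_self e.symm, Matrix.submatrix_submatrix]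
          exact hdet0
        have hform : (S.submatrix (Sum.elim b fun _ : Fin 1 => i)
            (Sum.elim j fun _ : Fin 1 => c)) =
            Matrix.fromBlocks D (Matrix.of fun r (_ : Fin 1) => S (b r) c)
              (Matrix.of fun (_ : Fin 1) t => S i (j t))
              (Matrix.of fun (_ : Fin 1) (_ : Fin 1) => S i c) := by
          ext (r | u) (t | v) <;> rfl
        rw [hform, Matrix.det_fromBlocks₁₁] at hdet1
        have h5 := (mul_eq_zero.mp hdet1).resolve_left hdet.ne_zero
        rw [Matrix.det_fin_one, Matrix.sub_apply] at h5
        have h6 := sub_eq_zero.mp h5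
        rw [invOf_eq_nonsing_inv] at h6
        calc ∑ r, (∑ t, S i (j t) * D⁻¹ t r) * S (b r) c
            = ((Matrix.of fun (_ : Fin 1) t => S i (j t)) * D⁻¹ *
                (Matrix.of fun r (_ : Fin 1) => S (b r) c)) 0 0 := by
              rw [Matrix.mul_apply]
              refine Finset.sum_congr rfl fun r _ => ?_
              rw [Matrix.mul_apply]
              rfl
          _ = S i c := h6.symm
  refine ⟨(Matrix.of fun i r => ∑ t, S i (j t) * D⁻¹ t r)ᵀ,
    Matrix.of (fun r c => S (b r) c), ?_⟩
  ext i c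
  rw [Matrix.transpose_transpose, Matrix.mul_apply]
  exact key i c

end StmtSixAux

/-- a nowhere-zero point `s` gives a slack matrix of a realization of `M`
iff `s` is a zero of the slack ideal. -/
theorem stmt6 {k : Type*} [Field k] {n d h : ℕ} (M : Matroid (Fin n))
    (hE : M.E = Set.univ) (hrk : HasRank M (d + 1))
    (H : Fin h → Set (Fin n)) (hH : HypEnum M d H)
    (s : SlackVar H → k) (hs : ∀ e, s e ≠ 0) :
    (∃ (V : Matrix (Fin (d + 1)) (Fin n) k) (W : Matrix (Fin (d + 1)) (Fin h) k),
        IsRealization M V ∧ IsNormalMatrix H V W ∧ Vᵀ * W = slackEval H s) ↔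
      (∀ f ∈ slackSet d H k, MvPolynomial.eval s f = 0) := by
  constructor
  · rintro ⟨V, W, -, -, hVW⟩ f ⟨N, hN⟩
    have hker : minorIdeal d H k ≤ RingHom.ker (MvPolynomial.eval s) := by
      refine Ideal.span_le.mpr ?_
      rintro g ⟨r, c, hr, hc, rfl⟩
      simp only [SetLike.mem_coe, RingHom.mem_ker]
      rw [RingHom.map_det,
        show (MvPolynomial.eval s).mapMatrix ((symbSlack H k).submatrix r c) =
          ((symbSlack H k).map (MvPolynomial.eval s)).submatrix r c from rfl,
        eval_symbSlack, ← hVW,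
        Matrix.submatrix_mul Vᵀ W r id c Function.bijective_id]
      exact det_mul_of_lt (by omega) _ _
    have h1 : MvPolynomial.eval s (allVarsProd H k ^ N * f) = 0 := hker hN
    rw [_root_.map_mul, map_pow] at h1
    have hP : MvPolynomial.eval s (allVarsProd H k) ≠ 0 := by
      rw [allVarsProd, map_prod]
      simp only [eval_X]
      exact Finset.prod_ne_zero_iff.mpr fun e _ => hs e
    exact (mul_eq_zero.mp h1).resolve_left (pow_ne_zero _ hP)
  · intro hzero
    have hmin : ∀ (r : Fin (d + 2) → Fin n) (c : Fin (d + 2) → Fin h),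
        Function.Injective r → Function.Injective c →
        ((slackEval H s).submatrix r c).det = 0 := by
      intro r c hr hc
      have hgen : ((symbSlack H k).submatrix r c).det ∈ minorIdeal d H k :=
        Ideal.subset_span ⟨r, c, hr, hc, rfl⟩
      have h2 := hzero _ ⟨0, by simpa using hgen⟩
      rwa [RingHom.map_det,
        show (MvPolynomial.eval s).mapMatrix ((symbSlack H k).submatrix r c) =
          ((symbSlack H k).map (MvPolynomial.eval s)).submatrix r c from rfl,
        eval_symbSlack] at h2
    obtain ⟨V, W, hfact⟩ := exists_factorization hE hrk hH s hs hmin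
    have hnorm : IsNormalMatrix H V W := by
      intro i c
      have hent : ∑ t, W t c * V t i = (Vᵀ * W) i c := by
        rw [Matrix.mul_apply]
        exact Finset.sum_congr rfl fun t _ => mul_comm _ _
      rw [hent, hfact]
      exact slackEval_eq_zero_iff hs i c
    exact ⟨V, W, isRealization_of_normal hE hrk hH hnorm, hnorm, hfact⟩
end

section
/- Let V be a realization of M, W a normal matrix for V, and S = Vᵀ * W the corresponding slack matrix. For any invertible diagonal matrices D_n : Matrix (Fin n) (Fin n) k and D_h : Matrix (Fin h) (Fin h) k, there exist a realization V' of M and a normal matrix W' for V' such that V'ᵀ * W' = D_n * S * D_h; that is, the set of slack matrices of realizations of M is closed under the action of the torus of row and column scalings. -/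
open Classical Matrix MvPolynomial

/-- the set of slack matrices of realizations of `M` is closed under the
torus action of row and column scalings. -/
theorem stmt7 {k : Type*} [Field k] {n d h : ℕ} (M : Matroid (Fin n))
    (hE : M.E = Set.univ) (hrk : HasRank M (d + 1))
    (H : Fin h → Set (Fin n)) (hH : HypEnum M d H)
    (V : Matrix (Fin (d + 1)) (Fin n) k) (hV : IsRealization M V)
    (W : Matrix (Fin (d + 1)) (Fin h) k) (hW : IsNormalMatrix H V W)
    (dn : Fin n → kˣ) (dh : Fin h → kˣ) :
    ∃ (V' : Matrix (Fin (d + 1)) (Fin n) k) (W' : Matrix (Fin (d + 1)) (Fin h) k),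
      IsRealization M V' ∧ IsNormalMatrix H V' W' ∧
        V'ᵀ * W' = Matrix.diagonal (fun i => (dn i : k)) * (Vᵀ * W) *
          Matrix.diagonal (fun j => (dh j : k)) := by
  refine ⟨V * Matrix.diagonal (fun i => (dn i : k)),
    W * Matrix.diagonal (fun j => (dh j : k)), ?_, ?_, ?_⟩
  · intro I
    rw [hV I]
    have hcol : ∀ i : Fin n, (V * Matrix.diagonal (fun i => (dn i : k)))ᵀ i
        = (dn i : k) • Vᵀ i := by
      intro i; ext r
      simp [Matrix.mul_apply, Matrix.diagonal, Matrix.transpose_apply, mul_comm]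
    constructor
    · intro hli
      have h2 := hli.units_smul (fun i : I => dn i)
      have heq : (fun i : I => (V * Matrix.diagonal (fun i => (dn i : k)))ᵀ (i : Fin n))
          = (fun i : I => dn i) • fun i : I => Vᵀ (i : Fin n) := by
        funext i; rw [hcol]; rfl
      rw [heq]; exact h2
    · intro hli
      have h2 := hli.units_smul (fun i : I => (dn i)⁻¹)
      have heq : (fun i : I => Vᵀ (i : Fin n))
          = (fun i : I => (dn i)⁻¹) • fun i : I =>
            (V * Matrix.diagonal (fun i => (dn i : k)))ᵀ (i : Fin n) := by
        funext i
        rw [Pi.smul_apply', hcol]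
        simp [Units.smul_def, smul_smul]
      rw [heq]; exact h2
  · intro i j
    rw [← hW i j]
    have : (∑ r : Fin (d + 1), (W * Matrix.diagonal (fun j => (dh j : k))) r j *
        (V * Matrix.diagonal (fun i => (dn i : k))) r i)
        = (dh j : k) * (dn i : k) * ∑ r : Fin (d + 1), W r j * V r i := by
      rw [Finset.mul_sum]
      refine Finset.sum_congr rfl fun r _ => ?_
      simp [Matrix.mul_apply, Matrix.diagonal]
      ring
    rw [this, mul_eq_zero, mul_eq_zero]
    simp [Units.ne_zero]
  · rw [Matrix.transpose_mul, Matrix.diagonal_transpose]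
    simp only [Matrix.mul_assoc]
end

section
/- If 1 ∈ I_M (equivalently, P^N ∈ J for some natural number N), then M has no realization over k. Conversely, if k is algebraically closed and M has no realization over k, then 1 ∈ I_M. -/
open Classical Matrix MvPolynomial

section Aux

variable {k : Type*} [Field k] {n d h : ℕ} {M : Matroid (Fin n)} {H : Fin h → Set (Fin n)}

/-- A "diagonal" family with nonzero diagonal entries is linearly independent. -/
lemma diagIndep {ι : Type*} [Fintype ι] (v : ι → ι → k)
    (hd : ∀ i, v i i ≠ 0) (ho : ∀ i j, i ≠ j → v i j = 0) :
    LinearIndependent k v := by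
  rw [Fintype.linearIndependent_iff]
  intro g hg i
  have h0 := congrFun hg i
  simp only [Finset.sum_apply, Pi.smul_apply, smul_eq_mul, Pi.zero_apply] at h0
  rw [Finset.sum_eq_single i] at h0
  · exact (mul_eq_zero.mp h0).resolve_right (hd i)
  · intro b _ hb; rw [ho b i hb, mul_zero]
  · intro hi; exact absurd (Finset.mem_univ i) hi

lemma closureFlat (M : Matroid (Fin n)) (X : Set (Fin n)) : M.IsFlat (M.closure X) := by
  haveI hne : Nonempty ↥{F : Set (Fin n) | M.IsFlat F ∧ X ∩ M.E ⊆ F} :=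
    ⟨⟨M.E, M.ground_isFlat, Set.inter_subset_right⟩⟩
  rw [Matroid.closure_def, Set.sInter_eq_iInter]
  exact Matroid.IsFlat.iInter fun F => F.2.1

lemma hyp_closure (hH : HypEnum M d H) {I : Set (Fin n)} (hI : M.Indep I) (hc : I.ncard = d) :
    ∃ j, H j = M.closure I :=
  (hH.2 _).mpr ⟨closureFlat M I, I, hI.isBasis_closure, hc⟩

lemma hyp_base (hH : HypEnum M d H) {B : Set (Fin n)} (hB : M.IsBase B) (hc : B.ncard = d + 1)
    {b : Fin n} (hb : b ∈ B) : ∃ j, H j = M.closure (B \ {b}) :=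
  hyp_closure hH (hB.indep.subset Set.diff_subset)
    (by rw [Set.ncard_diff_singleton_of_mem hb, hc]; omega)

variable {S : Matrix (Fin n) (Fin h) k}

/-- Rows of a slack-like matrix indexed by an independent set are linearly independent. -/
lemma rowsIndep (hE : M.E = Set.univ) (hH : HypEnum M d H) (hrk : HasRank M (d + 1))
    (hS0 : ∀ i j, i ∈ H j → S i j = 0) (hS1 : ∀ i j, i ∉ H j → S i j ≠ 0)
    {I : Set (Fin n)} (hI : M.Indep I) :
    LinearIndependent k (fun i : I => S i) := by
  obtain ⟨B, hB, hIB⟩ := hI.exists_isBase_superset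
  have hBc : B.ncard = d + 1 := by
    obtain ⟨B0, hB0, hc0⟩ := hrk
    rw [hB.ncard_eq_ncard_of_isBase hB0, hc0]
  have hj : ∀ i : I, ∃ j, H j = M.closure (B \ {(i : Fin n)}) :=
    fun i => hyp_base hH hB hBc (hIB i.2)
  choose j hjH using hj
  rw [Fintype.linearIndependent_iff]
  intro g hg i0
  have h0 := congrFun hg (j i0)
  simp only [Finset.sum_apply, Pi.smul_apply, smul_eq_mul, Pi.zero_apply] at h0
  rw [Finset.sum_eq_single i0] at h0
  · refine (mul_eq_zero.mp h0).resolve_right (hS1 _ _ ?_)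
    rw [hjH i0]
    exact hB.indep.notMem_closure_diff_of_mem (hIB i0.2)
  · intro b _ hb
    have hbH : (b : Fin n) ∈ H (j i0) := by
      rw [hjH i0]
      refine M.subset_closure _ (by rw [hE]; exact Set.subset_univ _)
        ⟨hIB b.2, fun hcol => hb (Subtype.ext hcol)⟩
    rw [hS0 _ _ hbH, mul_zero]
  · intro hi; exact absurd (Finset.mem_univ i0) hi

/-- Any `d+2` distinct rows of a matrix whose `(d+2)`-minors vanish are dependent. -/
lemma rowsNotIndepCard
    (hminor : ∀ (r : Fin (d + 2) → Fin n) (c : Fin (d + 2) → Fin h),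
      Function.Injective r → Function.Injective c → (S.submatrix r c).det = 0)
    {u : Fin (d + 2) → Fin n} (hu : Function.Injective u) :
    ¬ LinearIndependent k (fun i => S (u i)) := by
  intro hli
  set T : Matrix (Fin (d + 2)) (Fin h) k := S.submatrix u id with hT
  have hrankT : T.rank = d + 2 := by
    rw [← Matrix.rank_transpose, Matrix.rank_eq_finrank_span_cols, Matrix.col, Matrix.transpose_transpose]
    have hr : Set.range T = Set.range (fun i => S (u i)) := rfl
    rw [hr, finrank_span_eq_card hli, Fintype.card_fin]
  have hcols : Submodule.span k (Set.range Tᵀ) = ⊤ := by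
    apply Submodule.eq_top_of_finrank_eq
    change Module.finrank k (Submodule.span k (Set.range T.col)) = _
    rw [← Matrix.rank_eq_finrank_span_cols, hrankT, Module.finrank_fintype_fun_eq_card,
      Fintype.card_fin]
  obtain ⟨t, hts, htsp, hli2⟩ := exists_linearIndependent k (Set.range Tᵀ)
  rw [hcols] at htsp
  haveI : Fintype t := hli2.setFinite.fintype
  have hcardt : Fintype.card t = d + 2 := by
    have hb : Module.finrank k (Fin (d + 2) → k) = Fintype.card t :=
      Module.finrank_eq_card_basis
        (Module.Basis.mk hli2 (by rw [Subtype.range_coe, htsp]))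
    rw [Module.finrank_fintype_fun_eq_card, Fintype.card_fin] at hb
    omega
  set et : Fin (d + 2) ≃ t := (Fintype.equivFinOfCardEq hcardt).symm
  have hsel : ∀ v : t, ∃ jj : Fin h, Tᵀ jj = (v : Fin (d + 2) → k) := fun v => hts v.2
  choose cc hcc using hsel
  set c : Fin (d + 2) → Fin h := fun a => cc (et a)
  have hcinj : Function.Injective c := by
    intro a b hab
    have : ((et a : t) : Fin (d + 2) → k) = ((et b : t) : Fin (d + 2) → k) := by
      rw [← hcc (et a), ← hcc (et b)]
      exact congrArg Tᵀ hab
    exact et.injective (Subtype.ext this)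
  have hQcols : LinearIndependent k (fun a : Fin (d + 2) => (S.submatrix u c)ᵀ a) := by
    have he : (fun a : Fin (d + 2) => (S.submatrix u c)ᵀ a)
        = fun a => ((et a : t) : Fin (d + 2) → k) := by
      funext a
      rw [← hcc (et a)]
      rfl
    rw [he]
    exact hli2.comp (fun a => et a) et.injective
  have hQunit : IsUnit (S.submatrix u c) := Matrix.linearIndependent_cols_iff_isUnit.mp hQcols
  have hdet : (S.submatrix u c).det ≠ 0 :=
    ((Matrix.isUnit_iff_isUnit_det _).mp hQunit).ne_zero
  exact hdet (hminor u c hu hcinj)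

/-- Rows indexed by the closure of an independent set lie in the span of the rows of that set. -/
lemma rowMemSpan (hE : M.E = Set.univ) (hH : HypEnum M d H) (hrk : HasRank M (d + 1))
    (hS0 : ∀ i j, i ∈ H j → S i j = 0) (hS1 : ∀ i j, i ∉ H j → S i j ≠ 0)
    (hminor : ∀ (r : Fin (d + 2) → Fin n) (c : Fin (d + 2) → Fin h),
      Function.Injective r → Function.Injective c → (S.submatrix r c).det = 0)
    {I : Set (Fin n)} {x : Fin n} (hI : M.Indep I) (hx : x ∈ M.closure I) :
    S x ∈ Submodule.span k (S '' I) := by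
  by_cases hxI : x ∈ I
  · exact Submodule.subset_span ⟨x, hxI, rfl⟩
  obtain ⟨B, hB, hIB⟩ := hI.exists_isBase_superset
  have hBc : B.ncard = d + 1 := by
    obtain ⟨B0, hB0, hc0⟩ := hrk
    rw [hB.ncard_eq_ncard_of_isBase hB0, hc0]
  have hIBx : I ⊆ B \ {x} := fun y hy => ⟨hIB hy, fun hy1 => hxI (hy1 ▸ hy)⟩
  have hxB : x ∉ B := by
    intro hxB
    exact hB.indep.notMem_closure_diff_of_mem hxB
      (M.closure_subset_closure hIBx hx)
  have hcard : Fintype.card ↥(insert x B) = d + 2 := by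
    rw [← Nat.card_eq_fintype_card, Nat.card_coe_set_eq,
      Set.ncard_insert_of_notMem hxB (Set.toFinite B), hBc]
  set e2 : ↥(insert x B) ≃ Fin (d + 2) := Fintype.equivFinOfCardEq hcard
  set u : Fin (d + 2) → Fin n := fun a => ((e2.symm a : ↥(insert x B)) : Fin n)
  have hu : Function.Injective u :=
    Subtype.coe_injective.comp e2.symm.injective
  have hnot := rowsNotIndepCard hminor hu
  have hnotins : ¬ LinearIndependent k (fun i : ↥(insert x B) => S i) := by
    intro hli
    exact hnot (hli.comp e2.symm e2.symm.injective)
  replace hnotins : ¬ (LinearIndepOn k S B ∧ S x ∉ Submodule.span k (S '' B)) :=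
    fun hh => hnotins ((linearIndepOn_insert hxB).mpr hh)
  have hBli := rowsIndep hE hH hrk hS0 hS1 hB.indep
  have hxspan : S x ∈ Submodule.span k (S '' B) := by
    by_contra hns; exact hnotins ⟨hBli, hns⟩
  rw [show S '' B = Set.range (fun b : ↥B => S (b : Fin n)) from Set.image_eq_range _ _,
    Submodule.mem_span_range_iff_exists_fun] at hxspan
  obtain ⟨cf, hcf⟩ := hxspan
  have hczero : ∀ b : ↥B, (b : Fin n) ∉ I → cf b = 0 := by
    intro b0 hb0I
    obtain ⟨j0, hj0⟩ := hyp_base hH hB hBc b0.2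
    have h0 := congrFun hcf j0
    simp only [Finset.sum_apply, Pi.smul_apply, smul_eq_mul] at h0
    have hxj : S x j0 = 0 := by
      refine hS0 _ _ ?_
      rw [hj0]
      exact M.closure_subset_closure
        (show I ⊆ B \ {(b0 : Fin n)} from
          fun y hy => ⟨hIB hy, fun hy1 => hb0I (hy1 ▸ hy)⟩) hx
    rw [hxj, Finset.sum_eq_single b0] at h0
    · refine (mul_eq_zero.mp h0).resolve_right (hS1 _ _ ?_)
      rw [hj0]
      exact hB.indep.notMem_closure_diff_of_mem b0.2
    · intro b _ hb
      have hbH : (b : Fin n) ∈ H j0 := by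
        rw [hj0]
        refine M.subset_closure _ (by rw [hE]; exact Set.subset_univ _)
          ⟨b.2, fun hcol => hb (Subtype.ext hcol)⟩
      rw [hS0 _ _ hbH, mul_zero]
    · intro hb; exact absurd (Finset.mem_univ b0) hb
  rw [← hcf]
  apply Submodule.sum_mem
  intro b _
  by_cases hbI : (b : Fin n) ∈ I
  · exact Submodule.smul_mem _ _ (Submodule.subset_span ⟨b, hbI, rfl⟩)
  · rw [hczero b hbI, zero_smul]; exact Submodule.zero_mem _

/-- Rows of a dependent set are linearly dependent. -/
lemma rowsDep (hE : M.E = Set.univ) (hH : HypEnum M d H) (hrk : HasRank M (d + 1))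
    (hS0 : ∀ i j, i ∈ H j → S i j = 0) (hS1 : ∀ i j, i ∉ H j → S i j ≠ 0)
    (hminor : ∀ (r : Fin (d + 2) → Fin n) (c : Fin (d + 2) → Fin h),
      Function.Injective r → Function.Injective c → (S.submatrix r c).det = 0)
    {I : Set (Fin n)} (hdep : ¬ M.Indep I) :
    ¬ LinearIndependent k (fun i : I => S i) := by
  intro hli
  rw [Matroid.indep_iff_forall_notMem_closure_diff (by rw [hE]; exact Set.subset_univ _)]
    at hdep
  push_neg at hdep
  obtain ⟨x, hxI, hxcl⟩ := hdep
  obtain ⟨I', hI'⟩ := M.exists_isBasis (I \ {x}) (by rw [hE]; exact Set.subset_univ _)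
  have hxcl' : x ∈ M.closure I' := by rw [hI'.closure_eq_closure]; exact hxcl
  have hmem := rowMemSpan hE hH hrk hS0 hS1 hminor hI'.indep hxcl'
  have hxns : x ∉ ({y : I | (y : Fin n) ∈ I'} : Set I).image (fun _ => x) → True := fun _ => trivial
  have hnot := hli.notMem_span_image (s := {y : I | (y : Fin n) ∈ I'}) (x := ⟨x, hxI⟩)
    (by intro hmem'; exact (hI'.subset hmem').2 rfl)
  apply hnot
  refine Submodule.span_mono ?_ hmem
  rintro _ ⟨i, hiI', rfl⟩
  exact ⟨⟨i, (hI'.subset hiI').1⟩, hiI', rfl⟩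

/-- From a matrix with the slack zero-pattern, nonzero off-pattern entries and vanishing
`(d+2)`-minors, one can construct a realization of `M`. -/
lemma existsRealization (hE : M.E = Set.univ) (hrk : HasRank M (d + 1)) (hH : HypEnum M d H)
    (hS0 : ∀ i j, i ∈ H j → S i j = 0) (hS1 : ∀ i j, i ∉ H j → S i j ≠ 0)
    (hminor : ∀ (r : Fin (d + 2) → Fin n) (c : Fin (d + 2) → Fin h),
      Function.Injective r → Function.Injective c → (S.submatrix r c).det = 0) :
    ∃ V : Matrix (Fin (d + 1)) (Fin n) k, IsRealization M V := by
  obtain ⟨B, hB, hBc⟩ := id hrk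
  have hcardB : Fintype.card ↥B = d + 1 := by
    rw [← Nat.card_eq_fintype_card, Nat.card_coe_set_eq, hBc]
  set e : Fin (d + 1) ≃ ↥B := (Fintype.equivFinOfCardEq hcardB).symm
  have hj : ∀ r : Fin (d + 1), ∃ j, H j = M.closure (B \ {((e r : ↥B) : Fin n)}) :=
    fun r => hyp_base hH hB hBc (e r).2
  choose j hjH using hj
  set π : (Fin h → k) →ₗ[k] (Fin (d + 1) → k) := LinearMap.funLeft k k j with hπ
  have hπapp : ∀ (f : Fin h → k) (r : Fin (d + 1)), π f r = f (j r) := fun f r => rfl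
  set w : Fin (d + 1) → Fin (d + 1) → k := fun r' r => S ((e r' : ↥B) : Fin n) (j r) with hw
  have hwli : LinearIndependent k w := by
    apply diagIndep
    · intro r
      refine hS1 _ _ ?_
      rw [hjH r]
      exact hB.indep.notMem_closure_diff_of_mem (e r).2
    · intro r' r hne
      refine hS0 _ _ ?_
      rw [hjH r]
      refine M.subset_closure _ (by rw [hE]; exact Set.subset_univ _)
        ⟨(e r').2, fun hcol => hne (e.injective (Subtype.ext hcol))⟩
  set Wsp := Submodule.span k (Set.range (fun r : Fin (d + 1) => S ((e r : ↥B) : Fin n)))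
    with hWsp
  have hallrows : ∀ x : Fin n, S x ∈ Wsp := by
    intro x
    have hx : x ∈ M.closure B := by rw [hB.closure_eq, hE]; trivial
    have hsp := rowMemSpan hE hH hrk hS0 hS1 hminor hB.indep hx
    refine Submodule.span_le.mpr ?_ hsp
    rintro _ ⟨i, hiB, rfl⟩
    exact Submodule.subset_span ⟨e.symm ⟨i, hiB⟩, by simp⟩
  have hker : ∀ f ∈ Wsp, π f = 0 → f = 0 := by
    intro f hf hpf
    rw [hWsp, Submodule.mem_span_range_iff_exists_fun] at hf
    obtain ⟨cf, rfl⟩ := hf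
    have hsum : ∑ r, cf r • w r = 0 := by
      funext r0
      have := congrFun hpf r0
      rw [map_sum] at this
      simpa only [Finset.sum_apply, Pi.smul_apply, smul_eq_mul, _root_.map_smul,
        Pi.zero_apply, hπapp] using this
    have hz := Fintype.linearIndependent_iff.mp hwli cf hsum
    simp only [hz, zero_smul]
    exact Finset.sum_const_zero
  refine ⟨fun r i => S i (j r), ?_⟩
  intro I
  have hfam : (fun i : I => (fun r i' => S i' (j r))ᵀ (i : Fin n))
      = fun i : I => π (S (i : Fin n)) := by
    funext i; funext r; rfl
  show M.Indep I ↔ LinearIndependent k (fun i : I => π (S (i : Fin n)))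
  constructor
  · intro hI
    have hli := rowsIndep hE hH hrk hS0 hS1 hI
    have hdisj : Disjoint (Submodule.span k (Set.range (fun i : I => S (i : Fin n))))
        (LinearMap.ker π) := by
      rw [Submodule.disjoint_def]
      intro f hf hfk
      refine hker f ?_ (LinearMap.mem_ker.mp hfk)
      refine Submodule.span_le.mpr ?_ hf
      rintro _ ⟨i, rfl⟩
      exact hallrows _
    exact hli.map hdisj
  · intro hli
    by_contra hdep
    exact rowsDep hE hH hrk hS0 hS1 hminor hdep (LinearIndependent.of_comp π hli)

/-- A realization yields that `1` is not in the slack set. -/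
lemma noOne_of_realization (hE : M.E = Set.univ) (hH : HypEnum M d H)
    {V : Matrix (Fin (d + 1)) (Fin n) k} (hreal : IsRealization M V) :
    (1 : MvPolynomial (SlackVar H) k) ∉ slackSet d H k := by
  have key : ∀ jj : Fin h, ∃ φ : (Fin (d + 1) → k) →ₗ[k] k,
      ∀ i, (φ (Vᵀ i) = 0 ↔ i ∈ H jj) := by
    intro jj
    obtain ⟨hflat, Ij, hIj, hIjc⟩ := (hH.2 (H jj)).mp ⟨jj, rfl⟩
    set U := Submodule.span k ((fun i => Vᵀ i) '' Ij) with hU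
    have hclo : M.closure Ij = H jj := by rw [hIj.closure_eq_closure, hflat.closure]
    have hmemU : ∀ i, ((Vᵀ i) ∈ U ↔ i ∈ H jj) := by
      intro i
      by_cases hiI : i ∈ Ij
      · exact iff_of_true (Submodule.subset_span ⟨i, hiI, rfl⟩) (hIj.subset hiI)
      · have h1 : M.Indep (insert i Ij) ↔ i ∉ H jj := by
          rw [hIj.indep.insert_indep_iff_of_notMem hiI, hE, hclo]
          simp
        have h4 := linearIndepOn_insert (K := k) (f := fun i : Fin n => Vᵀ i) hiI
        have h2 := (hreal (insert i Ij)).trans h4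
        have h3 := hreal Ij
        constructor
        · intro hiU
          by_contra hiH
          exact (h2.mp (h1.mpr hiH)).2 hiU
        · intro hiH
          by_contra hiU
          exact (h1.mp (h2.mpr ⟨h3.mp hIj.indep, hiU⟩)) hiH
    have hUfin : Module.finrank k U = d := by
      have hli := (hreal Ij).mp hIj.indep
      rw [hU, show ((fun i => Vᵀ i) '' Ij) = Set.range (fun i : Ij => Vᵀ (i : Fin n))
        from Set.image_eq_range _ _, finrank_span_eq_card hli,
        ← Nat.card_eq_fintype_card, Nat.card_coe_set_eq, hIjc]
    have hQfin : Module.finrank k ((Fin (d + 1) → k) ⧸ U) = 1 := by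
      have hq := Submodule.finrank_quotient_add_finrank U
      rw [hUfin, Module.finrank_fintype_fun_eq_card, Fintype.card_fin] at hq
      omega
    obtain ⟨eq⟩ := FiniteDimensional.nonempty_linearEquiv_of_finrank_eq
      (R := k) (M := (Fin (d + 1) → k) ⧸ U) (M' := k)
      (by rw [hQfin, Module.finrank_self])
    refine ⟨eq.toLinearMap ∘ₗ U.mkQ, fun i => ?_⟩
    rw [LinearMap.comp_apply, LinearEquiv.coe_coe, LinearEquiv.map_eq_zero_iff,
      ← hmemU i, Submodule.mkQ_apply, Submodule.Quotient.mk_eq_zero]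
  choose φ hφ using key
  rintro ⟨N, hN⟩
  set xv : SlackVar H → k := fun e => φ e.1.2 (Vᵀ e.1.1) with hxv
  set Sk : Matrix (Fin n) (Fin h) k := fun i jj => φ jj (Vᵀ i) with hSk
  have hmap : (symbSlack H k).map (eval xv) = Sk := by
    funext i jj
    by_cases hij : i ∈ H jj
    · simp only [symbSlack, Matrix.map_apply, hij, dif_pos, map_zero, hSk]
      exact ((hφ jj i).mpr hij).symm
    · simp only [symbSlack, Matrix.map_apply, hij, dif_neg, not_false_iff, eval_X, hSk, hxv]
  set Wm : Matrix (Fin (d + 1)) (Fin h) k :=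
    fun r jj => φ jj (fun r' => if r = r' then 1 else 0) with hWm
  have hfact : Sk = Vᵀ * Wm := by
    funext i jj
    show φ jj (Vᵀ i) = (Vᵀ * Wm) i jj
    rw [Matrix.mul_apply]
    conv_lhs => rw [pi_eq_sum_univ (Vᵀ i)]
    rw [map_sum]
    exact Finset.sum_congr rfl fun r _ => by
      rw [_root_.map_smul, smul_eq_mul]
  have hminorSk : ∀ (r : Fin (d + 2) → Fin n) (c : Fin (d + 2) → Fin h),
      (Sk.submatrix r c).det = 0 := by
    intro r c
    rw [hfact, Matrix.submatrix_mul Vᵀ Wm r id c Function.bijective_id]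
    by_contra hdet
    have hunit : IsUnit ((Vᵀ.submatrix r id) * (Wm.submatrix id c)) :=
      (Matrix.isUnit_iff_isUnit_det _).mpr (isUnit_iff_ne_zero.mpr hdet)
    have h1 := Matrix.rank_of_isUnit _ hunit
    have h2 := Matrix.rank_mul_le_left (Vᵀ.submatrix r id) (Wm.submatrix id c)
    have h3 := Matrix.rank_le_width (Vᵀ.submatrix r id)
    rw [h1, Fintype.card_fin] at h2
    omega
  have hJker : minorIdeal d H k ≤ RingHom.ker (eval xv) := by
    rw [minorIdeal, Ideal.span_le]
    rintro f ⟨r, c, hr, hc, rfl⟩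
    rw [SetLike.mem_coe, RingHom.mem_ker, RingHom.map_det, RingHom.mapMatrix_apply,
      ← Matrix.submatrix_map, hmap]
    exact hminorSk r c
  have h0 := hJker hN
  rw [RingHom.mem_ker, mul_one, map_pow] at h0
  have hP : eval xv (allVarsProd H k) ≠ 0 := by
    rw [allVarsProd, map_prod]
    rw [Finset.prod_ne_zero_iff]
    intro e _
    rw [eval_X]
    intro h0'
    exact e.2 ((hφ e.1.2 e.1.1).mp h0')
  rcases eq_or_ne N 0 with rfl | hNne
  · rw [pow_zero] at h0
    exact one_ne_zero h0
  · exact hP (pow_eq_zero_iff hNne |>.mp h0)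

end Aux

/-- if `1 ∈ I_M` then `M` is not realizable over `k`; if `k` is algebraically
closed and `M` is not realizable over `k` then `1 ∈ I_M`. -/
theorem stmt9 {k : Type*} [Field k] {n d h : ℕ} (M : Matroid (Fin n))
    (hE : M.E = Set.univ) (hrk : HasRank M (d + 1))
    (H : Fin h → Set (Fin n)) (hH : HypEnum M d H) :
    ((1 : MvPolynomial (SlackVar H) k) ∈ slackSet d H k →
      ¬ ∃ V : Matrix (Fin (d + 1)) (Fin n) k, IsRealization M V) ∧
    (IsAlgClosed k →
      (¬ ∃ V : Matrix (Fin (d + 1)) (Fin n) k, IsRealization M V) →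
      (1 : MvPolynomial (SlackVar H) k) ∈ slackSet d H k) := by
  constructor
  · rintro h1 ⟨V, hV⟩
    exact noOne_of_realization hE hH hV h1
  · intro halg hnoreal
    haveI := halg
    haveI : Finite (SlackVar H) := Subtype.finite
    have hrad : allVarsProd H k ∈ (minorIdeal d H k).radical := by
      rw [← vanishingIdeal_zeroLocus_eq_radical (K := k), mem_vanishingIdeal_iff]
      intro x hx
      change eval x (allVarsProd H k) = 0
      by_contra hPx
      apply hnoreal
      have hxe : ∀ e : SlackVar H, x e ≠ 0 := by
        intro e he
        apply hPx
        rw [allVarsProd, map_prod]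
        exact Finset.prod_eq_zero (Finset.mem_univ e) (by rw [eval_X, he])
      refine existsRealization hE hrk hH (S := slackEval H x) ?_ ?_ ?_
      · intro i j hij
        simp only [slackEval, hij, dif_pos]
      · intro i j hij
        simp only [slackEval, hij, dif_neg, not_false_iff]
        exact hxe _
      · intro r c hr hc
        have hgen : ((symbSlack H k).submatrix r c).det ∈ minorIdeal d H k :=
          Ideal.subset_span ⟨r, c, hr, hc, rfl⟩
        have hz := (mem_zeroLocus_iff.mp hx) _ hgen
        change eval x ((symbSlack H k).submatrix r c).det = 0 at hz
        rw [RingHom.map_det, RingHom.mapMatrix_apply, ← Matrix.submatrix_map] at hz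
        have hmap : (symbSlack H k).map (eval x) = slackEval H x := by
          funext i j
          by_cases hij : i ∈ H j
          · simp only [symbSlack, slackEval, Matrix.map_apply, hij, dif_pos, map_zero]
          · simp only [symbSlack, slackEval, Matrix.map_apply, hij, dif_neg,
              not_false_iff, eval_X]
        rwa [hmap] at hz
    obtain ⟨N, hN⟩ := Ideal.mem_radical_iff.mp hrad
    exact ⟨N, by rwa [mul_one]⟩
end

section
/- The following are equivalent: (i) 1 ∈ I_M; (ii) there exists a monic monomial m ∈ R (a finite product of the variables, possibly with repetitions) with m ∈ J; (iii) there exist a monic monomial m ∈ R and an element g ∈ I_M such that m + g ∈ J (that is, a slack final polynomial for M exists). -/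
open Classical Matrix MvPolynomial

lemma monomial_dvd_pow_allVarsProd {n h : ℕ} (H : Fin h → Set (Fin n)) (k : Type*)
    [Field k] (t : Multiset (SlackVar H)) :
    (t.map (fun e => (X e : MvPolynomial (SlackVar H) k))).prod ∣
      allVarsProd H k ^ Multiset.card t := by
  induction t using Multiset.induction with
  | empty => simp
  | cons a t ih =>
    rw [Multiset.map_cons, Multiset.prod_cons, Multiset.card_cons, pow_succ']
    exact mul_dvd_mul (Finset.dvd_prod_of_mem _ (Finset.mem_univ a)) ih

lemma prod_map_X_nsmul_univ {n h : ℕ} (H : Fin h → Set (Fin n)) (k : Type*)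
    [Field k] (N : ℕ) :
    (((N • (Finset.univ.val : Multiset (SlackVar H))).map
      (fun e => (X e : MvPolynomial (SlackVar H) k))).prod) = allVarsProd H k ^ N := by
  rw [Multiset.map_nsmul, Multiset.prod_nsmul]
  rfl

/-- `1 ∈ I_M` iff a monic monomial lies in `J` iff a slack final polynomial
exists for `M`. -/
theorem stmt10 {k : Type*} [Field k] {n d h : ℕ} (M : Matroid (Fin n))
    (hE : M.E = Set.univ) (hrk : HasRank M (d + 1))
    (H : Fin h → Set (Fin n)) (hH : HypEnum M d H) :
    List.TFAE [
      (1 : MvPolynomial (SlackVar H) k) ∈ slackSet d H k,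
      ∃ t : Multiset (SlackVar H),
        (t.map (fun e => (X e : MvPolynomial (SlackVar H) k))).prod ∈ minorIdeal d H k,
      ∃ (t : Multiset (SlackVar H)) (g : MvPolynomial (SlackVar H) k),
        g ∈ slackSet d H k ∧
        (t.map (fun e => (X e : MvPolynomial (SlackVar H) k))).prod + g
          ∈ minorIdeal d H k ] := by
  tfae_have 1 → 2 := by
    rintro ⟨N, hN⟩
    exact ⟨N • (Finset.univ.val : Multiset (SlackVar H)), by
      rw [prod_map_X_nsmul_univ]
      simpa using hN⟩
  tfae_have 2 → 3 := by
    rintro ⟨t, ht⟩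
    exact ⟨t, 0, ⟨0, by simpa using (minorIdeal d H k).zero_mem⟩, by simpa using ht⟩
  tfae_have 3 → 1 := by
    rintro ⟨t, g, ⟨N1, hg⟩, hmg⟩
    obtain ⟨m', hm'⟩ := monomial_dvd_pow_allVarsProd H k t
    refine ⟨N1 + Multiset.card t, ?_⟩
    have h1 : allVarsProd H k ^ N1 *
        ((t.map (fun e => (X e : MvPolynomial (SlackVar H) k))).prod + g)
        ∈ minorIdeal d H k := Ideal.mul_mem_left _ _ hmg
    have h2 : allVarsProd H k ^ N1 *
        (t.map (fun e => (X e : MvPolynomial (SlackVar H) k))).prod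
        ∈ minorIdeal d H k := by
      have := (minorIdeal d H k).sub_mem h1 hg
      rwa [mul_add, add_sub_cancel_right] at this
    have : allVarsProd H k ^ (N1 + Multiset.card t) * 1 =
        (allVarsProd H k ^ N1 *
          (t.map (fun e => (X e : MvPolynomial (SlackVar H) k))).prod) * m' := by
      rw [mul_one, pow_add, hm']; ring
    rw [this]
    exact Ideal.mul_mem_right _ _ h2
  tfae_finish
end
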